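/- Let X be a simple graph with bounded degree and t a complex number. The operators C_m(t) on ℓ²(VX) satisfy the recurrence: C_2(t) = C_1(t)² − (1−t)(Q_X + I), and for m ≥ 3, C_m(t) = C_{m−1}(t) C_1(t) − (1−t) C_{m−2}(t) Q_X(t). -/

import Mathlib

open scoped BigOperators
open SimpleGraph

noncomputable section

namespace BZ

open Classical

variable {V : Type*} (G : SimpleGraph V)

/-- Bump count of a walk: the number of indices `i` with `e_i = ē_{i+1}`. -/
def bc {x y : V} (w : G.Walk x y) : ℕ :=
  ((w.darts.zip w.darts.tail).filter fun p => p.2 = p.1.symm).length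

/-- A closed walk has a tail if `e_m = ē_1` (with `m ≥ 1`). -/
def hasTail {x : V} (w : G.Walk x x) : Prop :=
  1 ≤ w.length ∧ w.darts.getLast? = w.darts.head?.map SimpleGraph.Dart.symm

/-- Cyclic bump count of a closed walk: `cbc = bc + 1` if the walk has a tail, else `bc`. -/
def cbc {x : V} (w : G.Walk x x) : ℕ :=
  bc G w + if hasTail G w then 1 else 0

/-- `C_m(t)(x, y)`: the weighted count `∑ t^{bc(C)}` over walks from `x` to `y` of length `m`. -/
def Cent (t : ℂ) (m : ℕ) (x y : V) : ℂ :=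
  ∑' w : {w : G.Walk x y // w.length = m}, t ^ bc G w.1

/-- `α(t) = (M + √(M² + 4(|t|+1)M))/2`, where `M` bounds the degrees. -/
def alpha (M : ℕ) (t : ℂ) : ℝ :=
  ((M : ℝ) + Real.sqrt ((M : ℝ) ^ 2 + 4 * (‖t‖ + 1) * (M : ℝ))) / 2

/-- The `ℓ²`-space on the vertex set `V`. -/
abbrev L2V (V : Type*) := lp (fun _ : V => ℂ) 2

section Aux

private lemma zip_tail_concat {α : Type*} (l : List α) (a : α) :
    (l ++ [a]).zip (l ++ [a]).tail
      = l.zip l.tail ++ (l.getLast?.map fun b => (b, a)).toList := by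
  induction l with
  | nil => simp
  | cons x xs ih =>
    cases xs with
    | nil => simp
    | cons y ys =>
      simp only [List.cons_append, List.tail_cons, List.zip_cons_cons] at ih ⊢
      rw [ih]
      simp

private lemma bc_concat {x y z : V} (w : G.Walk x y) (h : G.Adj y z) :
    bc G (w.concat h) =
      bc G w + if w.darts.getLast? = some (SimpleGraph.Dart.symm ⟨(y, z), h⟩) then 1 else 0 := by
  unfold bc
  rw [SimpleGraph.Walk.darts_concat, List.concat_eq_append, zip_tail_concat, List.filter_append,
    List.length_append]
  congr 1
  cases hl : w.darts.getLast? with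
  | none => simp
  | some b =>
    simp only [Option.map_some, Option.toList_some, Option.some.injEq]
    by_cases hd : ((⟨(y, z), h⟩ : G.Dart)) = b.symm
    · rw [List.filter_cons_of_pos (by simpa using hd), if_pos (by rw [hd]; simp)]
      simp
    · rw [List.filter_cons_of_neg (by simpa using hd),
        if_neg (fun hh => hd (by rw [hh]; simp))]
      simp

variable {V : Type*} [DecidableEq V] (G : SimpleGraph V) [G.LocallyFinite]

private lemma sum_concat (x y : V) (n : ℕ) (f : G.Walk x y → ℂ) :
    ∑ w : {w : G.Walk x y // w.length = n + 1}, f w.1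
      = ∑ z : G.neighborSet y, ∑ w : {w : G.Walk x (z : V) // w.length = n},
          f (w.1.concat ((G.mem_neighborSet y z.1).mp z.2).symm) := by
  classical
  have key : Function.Bijective
      (fun p : (Σ z : G.neighborSet y, {w : G.Walk x (z : V) // w.length = n}) =>
        (⟨p.2.1.concat ((G.mem_neighborSet y p.1.1).mp p.1.2).symm,
          by rw [SimpleGraph.Walk.length_concat, p.2.2]⟩ :
            {w : G.Walk x y // w.length = n + 1})) := by
    constructor
    · rintro ⟨⟨z, hz⟩, ⟨w, hw⟩⟩ ⟨⟨z', hz'⟩, ⟨w', hw'⟩⟩ h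
      simp only [Subtype.mk.injEq] at h
      obtain ⟨rfl, h2⟩ := SimpleGraph.Walk.concat_inj h
      rw [SimpleGraph.Walk.copy_rfl_rfl] at h2
      subst h2
      rfl
    · rintro ⟨w, hw⟩
      cases w with
      | nil => simp at hw
      | cons h p =>
        obtain ⟨zz, q, hadj, heq⟩ := SimpleGraph.Walk.exists_cons_eq_concat h p
        have hq : q.length = n := by
          have h1 := congrArg SimpleGraph.Walk.length heq
          rw [SimpleGraph.Walk.length_concat] at h1
          omega
        exact ⟨⟨⟨zz, (G.mem_neighborSet y zz).mpr hadj.symm⟩, ⟨q, hq⟩⟩, Subtype.ext heq.symm⟩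
  calc ∑ w : {w : G.Walk x y // w.length = n + 1}, f w.1
      = ∑ p : (Σ z : G.neighborSet y, {w : G.Walk x (z : V) // w.length = n}),
          f (p.2.1.concat ((G.mem_neighborSet y p.1.1).mp p.1.2).symm) :=
        (Fintype.sum_bijective _ key _ _ (fun p => rfl)).symm
    _ = _ := by rw [← Finset.univ_sigma_univ, Finset.sum_sigma]

private lemma walk_length_one_eq {x y : V} (w : G.Walk x y) (hw : w.length = 1) :
    ∃ h : G.Adj x y, w = SimpleGraph.Walk.cons h SimpleGraph.Walk.nil := by
  cases w with
  | nil => simp at hw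
  | cons h p =>
    have hp : p.length = 0 := by simpa using hw
    have he := SimpleGraph.Walk.eq_of_length_eq_zero hp
    subst he
    rw [SimpleGraph.Walk.length_eq_zero_iff, SimpleGraph.Walk.nil_iff_eq_nil] at hp
    subst hp
    exact ⟨h, rfl⟩

private lemma bc_single {x y : V} (h : G.Adj x y) :
    bc G (SimpleGraph.Walk.cons h SimpleGraph.Walk.nil) = 0 := by
  simp [bc]

private lemma Cent_eq_sum (t : ℂ) (m : ℕ) (x y : V) :
    Cent G t m x y = ∑ w : {w : G.Walk x y // w.length = m}, t ^ bc G w.1 :=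
  tsum_fintype _

private lemma Cent_one (t : ℂ) (x y : V) :
    Cent G t 1 x y = if G.Adj x y then 1 else 0 := by
  rw [Cent_eq_sum]
  split_ifs with h
  · haveI : Unique {w : G.Walk x y // w.length = 1} :=
      ⟨⟨⟨SimpleGraph.Walk.cons h SimpleGraph.Walk.nil, rfl⟩⟩, by
        rintro ⟨w, hw⟩
        obtain ⟨h', rfl⟩ := walk_length_one_eq G w hw
        rfl⟩
    have hv : ∀ w : {w : G.Walk x y // w.length = 1}, t ^ bc G w.1 = 1 := by
      rintro ⟨w, hw⟩
      obtain ⟨h', rfl⟩ := walk_length_one_eq G w hw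
      rw [bc_single, pow_zero]
    rw [Finset.sum_congr rfl (fun w _ => hv w), Finset.sum_const, Finset.card_univ,
      Fintype.card_unique, one_smul]
  · haveI : IsEmpty {w : G.Walk x y // w.length = 1} :=
      ⟨fun w => h (walk_length_one_eq G w.1 w.2).choose⟩
    simp

private lemma concat_single_pow (t : ℂ) {x y z : V} (adj : G.Adj z y)
    (w : {w : G.Walk x z // w.length = 1}) :
    t ^ bc G (w.1.concat adj) = (if x = y then t else 1) * t ^ bc G w.1 := by
  obtain ⟨w, hw⟩ := w
  obtain ⟨h', rfl⟩ := walk_length_one_eq G w hw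
  rw [bc_concat, bc_single]
  have hcond : ((SimpleGraph.Walk.cons h' SimpleGraph.Walk.nil).darts.getLast?
      = some (SimpleGraph.Dart.symm ⟨(z, y), adj⟩)) ↔ x = y := by
    simp [SimpleGraph.Dart.ext_iff, Prod.ext_iff, SimpleGraph.Dart.symm]
  by_cases hxy : x = y
  · rw [if_pos (hcond.mpr hxy), if_pos hxy]
    simp
  · rw [if_neg (fun c => hxy (hcond.mp c)), if_neg hxy]
    simp

private lemma centA (t : ℂ) (x y : V) :
    Cent G t 2 x y = (∑ z : G.neighborSet y, Cent G t 1 x z)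
      - (1 - t) * (if x = y then (G.degree y : ℂ) else 0) := by
  rw [Cent_eq_sum, show (2 : ℕ) = 1 + 1 from rfl, sum_concat G x y 1 (fun w => t ^ bc G w)]
  have step : ∀ z : G.neighborSet y,
      (∑ w : {w : G.Walk x (z : V) // w.length = 1},
        t ^ bc G (w.1.concat ((G.mem_neighborSet y z.1).mp z.2).symm))
      = (if x = y then t else 1) * Cent G t 1 x z := by
    intro z
    rw [Cent_eq_sum, Finset.mul_sum]
    exact Finset.sum_congr rfl fun w _ => concat_single_pow G t _ w
  rw [Finset.sum_congr rfl (fun z _ => step z), ← Finset.mul_sum]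
  by_cases hxy : x = y
  · subst hxy
    rw [if_pos rfl, if_pos rfl]
    have hC : ∀ z : G.neighborSet x, Cent G t 1 x ↑z = 1 := fun z => by
      rw [Cent_one, if_pos ((G.mem_neighborSet x z.1).mp z.2)]
    rw [Finset.sum_congr rfl (fun z _ => hC z), Finset.sum_const, Finset.card_univ,
      SimpleGraph.card_neighborSet_eq_degree]
    simp only [nsmul_eq_mul, mul_one]
    ring
  · rw [if_neg hxy, if_neg hxy, one_mul, mul_zero, sub_zero]

private lemma pow_split1 (t : ℂ) (b : ℕ) (c : Prop) [Decidable c] :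
    t ^ (b + if c then 1 else 0) = t ^ b + if c then (t - 1) * t ^ b else 0 := by
  split_ifs
  · rw [pow_succ]; ring
  · rw [add_zero, add_zero]

private lemma pow_split2 (t : ℂ) (b : ℕ) (c : Prop) [Decidable c] :
    t ^ (b + if c then 1 else 0) = t ^ b * (if c then t else 1) := by
  split_ifs
  · rw [pow_succ]
  · rw [add_zero, mul_one]

private lemma centB (t : ℂ) (k : ℕ) (x y : V) :
    Cent G t (k + 3) x y = (∑ z : G.neighborSet y, Cent G t (k + 2) x z)
      - (1 - t) * ((G.degree y : ℂ) - (1 - t)) * Cent G t (k + 1) x y := by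
  rw [Cent_eq_sum, show k + 3 = (k + 2) + 1 from rfl,
    sum_concat G x y (k + 2) (fun w => t ^ bc G w)]
  have step1 : ∀ z : G.neighborSet y,
      (∑ w : {w : G.Walk x (z : V) // w.length = k + 2},
        t ^ bc G (w.1.concat ((G.mem_neighborSet y z.1).mp z.2).symm))
      = Cent G t (k + 2) x z
        + (t - 1) * ∑ w : {w : G.Walk x (z : V) // w.length = k + 2},
          (if w.1.darts.getLast?
              = some (SimpleGraph.Dart.symm ⟨((z : V), y), ((G.mem_neighborSet y z.1).mp z.2).symm⟩)
            then t ^ bc G w.1 else 0) := by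
    intro z
    rw [Cent_eq_sum, Finset.mul_sum, ← Finset.sum_add_distrib]
    refine Finset.sum_congr rfl fun w _ => ?_
    rw [bc_concat, pow_split1]
    congr 1
    split_ifs
    · ring
    · ring
  rw [Finset.sum_congr rfl (fun z _ => step1 z), Finset.sum_add_distrib, ← Finset.mul_sum]
  -- Now compute the correction term S.
  have step2 : ∀ z : G.neighborSet y,
      (∑ w : {w : G.Walk x (z : V) // w.length = k + 2},
          (if w.1.darts.getLast?
              = some (SimpleGraph.Dart.symm ⟨((z : V), y), ((G.mem_neighborSet y z.1).mp z.2).symm⟩)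
            then t ^ bc G w.1 else 0))
      = ∑ u : {u : G.Walk x y // u.length = k + 1},
          t ^ bc G u.1 * (if u.1.darts.getLast?
              = some (SimpleGraph.Dart.symm ⟨(y, (z : V)),
                  (G.mem_neighborSet y z.1).mp z.2⟩) then t else 1) := by
    intro z
    have hzy : G.Adj (z : V) y := ((G.mem_neighborSet y z.1).mp z.2).symm
    rw [show k + 2 = (k + 1) + 1 from rfl,
      sum_concat G x (z : V) (k + 1)
        (fun w => if w.darts.getLast?
            = some (SimpleGraph.Dart.symm ⟨((z : V), y), hzy⟩) then t ^ bc G w else 0)]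
    have hy : y ∈ G.neighborSet (z : V) := (G.mem_neighborSet (z : V) y).mpr hzy
    have collapse : ∀ y' : G.neighborSet (z : V),
        (∑ u : {u : G.Walk x ((y' : V)) // u.length = k + 1},
          (if ((u.1.concat ((G.mem_neighborSet (z : V) y'.1).mp y'.2).symm).darts.getLast?
              = some (SimpleGraph.Dart.symm ⟨((z : V), y), hzy⟩))
            then t ^ bc G (u.1.concat ((G.mem_neighborSet (z : V) y'.1).mp y'.2).symm) else 0))
        = if y' = (⟨y, hy⟩ : G.neighborSet (z : V)) then
            (∑ u : {u : G.Walk x ((y' : V)) // u.length = k + 1},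
              t ^ bc G (u.1.concat ((G.mem_neighborSet (z : V) y'.1).mp y'.2).symm)) else 0 := by
      intro y'
      have hcond : ∀ u : {u : G.Walk x ((y' : V)) // u.length = k + 1},
          (((u.1.concat ((G.mem_neighborSet (z : V) y'.1).mp y'.2).symm).darts.getLast?
              = some (SimpleGraph.Dart.symm ⟨((z : V), y), hzy⟩)))
          ↔ y' = (⟨y, hy⟩ : G.neighborSet (z : V)) := by
        intro u
        rw [SimpleGraph.Walk.darts_concat, List.concat_eq_append, List.getLast?_concat,
          Option.some.injEq]
        constructor
        · intro h
          have := congrArg (fun d => d.toProd) h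
          simp [SimpleGraph.Dart.symm, Prod.ext_iff] at this
          exact Subtype.ext this
        · intro h
          subst h
          apply SimpleGraph.Dart.ext
          simp [SimpleGraph.Dart.symm]
      by_cases hc : y' = (⟨y, hy⟩ : G.neighborSet (z : V))
      · rw [if_pos hc]
        exact Finset.sum_congr rfl fun u _ => if_pos ((hcond u).mpr hc)
      · rw [if_neg hc]
        rw [Finset.sum_congr rfl (fun u _ => if_neg (fun c => hc ((hcond u).mp c))),
          Finset.sum_const, smul_zero]
    rw [Finset.sum_congr rfl (fun y' _ => collapse y'), Finset.sum_ite_eq' Finset.univ,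
      if_pos (Finset.mem_univ _)]
    show (∑ u : {u : G.Walk x y // u.length = k + 1},
        t ^ bc G (u.1.concat ((G.mem_neighborSet y z.1).mp z.2))) = _
    refine Finset.sum_congr rfl fun u _ => ?_
    rw [bc_concat, pow_split2]
    by_cases hC : u.1.darts.getLast?
        = some (SimpleGraph.Dart.symm ⟨(y, (z : V)), (G.mem_neighborSet y z.1).mp z.2⟩)
    · rw [if_pos hC, if_pos hC]
    · rw [if_neg hC, if_neg hC]
  rw [Finset.sum_congr rfl (fun z _ => step2 z)]
  rw [Finset.sum_comm]
  -- Now the inner sum over z, for fixed u.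
  have step3 : ∀ u : {u : G.Walk x y // u.length = k + 1},
      (∑ z : G.neighborSet y,
        t ^ bc G u.1 * (if u.1.darts.getLast?
            = some (SimpleGraph.Dart.symm ⟨(y, (z : V)),
                (G.mem_neighborSet y z.1).mp z.2⟩) then t else 1))
      = t ^ bc G u.1 * ((G.degree y : ℂ) + (t - 1)) := by
    intro u
    rw [← Finset.mul_sum]
    congr 1
    have hne : u.1.darts ≠ [] := by
      have := u.1.length_darts
      rw [u.2] at this
      exact List.ne_nil_of_length_pos (by omega)
    set d0 := u.1.darts.getLast hne with hd0
    have hlast : u.1.darts.getLast? = some d0 := List.getLast?_eq_getLast hne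
    have hsnd : d0.snd = y := by
      rw [hd0, SimpleGraph.Walk.getLast_darts_eq_lastDart hne]; rfl
    have hfst : d0.fst ∈ G.neighborSet y := by
      have := d0.adj
      rw [hsnd] at this
      exact (G.mem_neighborSet y d0.fst).mpr this.symm
    have hcond : ∀ z : G.neighborSet y,
        ((u.1.darts.getLast? = some (SimpleGraph.Dart.symm ⟨(y, (z : V)),
            (G.mem_neighborSet y z.1).mp z.2⟩)))
        ↔ z = (⟨d0.fst, hfst⟩ : G.neighborSet y) := by
      intro z
      rw [hlast, Option.some.injEq]
      constructor
      · intro h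
        have := congrArg (fun d => d.toProd) h
        simp [SimpleGraph.Dart.symm, Prod.ext_iff] at this
        exact Subtype.ext this.1.symm
      · intro h
        apply SimpleGraph.Dart.ext
        have hz : (z : V) = d0.fst := by rw [h]
        simp [SimpleGraph.Dart.symm, Prod.ext_iff, hz, hsnd]
    rw [Finset.sum_congr rfl (fun z _ => if_congr (hcond z) rfl rfl)]
    have expand : ∀ z : G.neighborSet y,
        (if z = (⟨d0.fst, hfst⟩ : G.neighborSet y) then t else 1)
        = 1 + (if z = (⟨d0.fst, hfst⟩ : G.neighborSet y) then t - 1 else 0) := by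
      intro z
      split_ifs
      · ring
      · ring
    rw [Finset.sum_congr rfl (fun z _ => expand z), Finset.sum_add_distrib,
      Finset.sum_const, Finset.card_univ, SimpleGraph.card_neighborSet_eq_degree,
      Finset.sum_ite_eq' Finset.univ, if_pos (Finset.mem_univ _)]
    simp [nsmul_eq_mul]
  rw [Finset.sum_congr rfl (fun u _ => step3 u), ← Finset.sum_mul, ← Cent_eq_sum]
  ring

private lemma single_one_apply {W : Type*} [DecidableEq W] (x y : W) :
    (lp.single 2 y (1 : ℂ) : ∀ _ : W, ℂ) x = if x = y then 1 else 0 := by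
  rw [lp.single_apply]
  split_ifs with h
  · subst h; simp
  · simp [h]

private lemma op_ext {W : Type*} [DecidableEq W] (T S : L2V W →L[ℂ] L2V W)
    (h : ∀ y : W, T (lp.single 2 y 1) = S (lp.single 2 y 1)) : T = S := by
  refine ContinuousLinearMap.ext fun f => ?_
  have hf : HasSum (fun i : W => lp.single 2 i (f i)) f :=
    lp.hasSum_single (by norm_num) f
  have h1 : HasSum (fun i : W => T (lp.single 2 i (f i))) (T f) := hf.mapL T
  have h2 : HasSum (fun i : W => S (lp.single 2 i (f i))) (S f) := hf.mapL S
  have he : (fun i : W => T (lp.single 2 i (f i))) = fun i => S (lp.single 2 i (f i)) := by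
    funext i
    have e : lp.single 2 i (f i) = (f i • lp.single 2 i (1 : ℂ) : L2V W) := by
      rw [← lp.single_smul, smul_eq_mul, mul_one]
    rw [e, map_smul, map_smul, h i]
  exact h1.unique (he ▸ h2)

private lemma cop_single (t : ℂ) (T : L2V V →L[ℂ] L2V V)
    (hC : ∀ x y : V, (T (lp.single 2 y 1)) x = Cent G t 1 x y) (y : V) :
    T (lp.single 2 y 1) = ∑ z : G.neighborSet y, lp.single 2 (z : V) (1 : ℂ) := by
  apply lp.ext
  funext x
  rw [hC x y, Cent_one, lp.coeFn_sum, Finset.sum_apply]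
  simp only [single_one_apply]
  by_cases h : G.Adj x y
  · have hiff : ∀ z : G.neighborSet y,
        (x = (z : V)) ↔ (z = ⟨x, (G.mem_neighborSet y x).mpr h.symm⟩) :=
      fun z => ⟨fun hh => Subtype.ext hh.symm, fun hh => by rw [hh]⟩
    rw [if_pos h, Finset.sum_congr rfl (fun z _ => if_congr (hiff z) rfl rfl),
      Finset.sum_ite_eq' Finset.univ
        (⟨x, (G.mem_neighborSet y x).mpr h.symm⟩ : G.neighborSet y) (fun _ => (1 : ℂ)),
      if_pos (Finset.mem_univ _)]
  · rw [if_neg h]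
    refine (Finset.sum_eq_zero fun z _ => if_neg fun c => h ?_).symm
    have hz := (G.mem_neighborSet y z.1).mp z.2
    rw [← c] at hz
    exact hz.symm

private lemma dop_single (Dop : L2V V →L[ℂ] L2V V)
    (hD : ∀ x y : V, (Dop (lp.single 2 y 1)) x = if x = y then (G.degree x : ℂ) else 0)
    (y : V) :
    Dop (lp.single 2 y 1) = (G.degree y : ℂ) • lp.single 2 y 1 := by
  apply lp.ext
  funext x
  rw [hD x y, lp.coeFn_smul, Pi.smul_apply, single_one_apply, smul_eq_mul]
  by_cases h : x = y
  · rw [if_pos h, if_pos h, h, mul_one]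
  · rw [if_neg h, if_neg h, mul_zero]

end Aux

/-- For a simple graph with bounded degree, the operators `C_m(t)` satisfy the recurrence
`C_2(t) = C_1(t)² − (1−t)(Q_X + I)` and, for `m ≥ 3`,
`C_m(t) = C_{m−1}(t) C_1(t) − (1−t) C_{m−2}(t) Q_X(t)`, where `Q_X = D_X − I` and
`Q_X(t) = D_X − (1−t)I`. -/
theorem Cop_recurrence {V : Type*} [DecidableEq V] (G : SimpleGraph V)
    [G.LocallyFinite] (M : ℕ) (hM : ∀ v : V, G.degree v ≤ M)
    (t : ℂ)
    (Cop : ℕ → (L2V V →L[ℂ] L2V V)) (Dop : L2V V →L[ℂ] L2V V)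
    (hCop : ∀ (m : ℕ) (x y : V), (Cop m (lp.single 2 y 1)) x = Cent G t m x y)
    (hDop : ∀ x y : V, (Dop (lp.single 2 y 1)) x = if x = y then (G.degree x : ℂ) else 0) :
    Cop 2 = Cop 1 * Cop 1 - (1 - t) • ((Dop - 1) + 1) ∧
      ∀ m : ℕ, 3 ≤ m →
        Cop m = Cop (m - 1) * Cop 1 - (1 - t) • (Cop (m - 2) * (Dop - (1 - t) • 1)) := by
  have hsingle : ∀ y : V,
      Cop 1 (lp.single 2 y 1) = ∑ z : G.neighborSet y, lp.single 2 (z : V) (1 : ℂ) :=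
    cop_single G t (Cop 1) (hCop 1)
  constructor
  · have hDop1 : (Dop - 1) + 1 = Dop := by abel
    rw [hDop1]
    apply op_ext
    intro y
    apply lp.ext
    funext x
    simp only [ContinuousLinearMap.sub_apply, ContinuousLinearMap.smul_apply,
      ContinuousLinearMap.mul_apply, hsingle y, map_sum, lp.coeFn_sub, Pi.sub_apply,
      lp.coeFn_smul, Pi.smul_apply, smul_eq_mul, lp.coeFn_sum, Finset.sum_apply,
      hCop, hDop]
    rw [centA G t x y]
    by_cases h : x = y
    · subst h
      rfl
    · rw [if_neg h, if_neg h]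
  · intro m hm
    obtain ⟨k, rfl⟩ : ∃ k, m = k + 3 := ⟨m - 3, by omega⟩
    have h1 : k + 3 - 1 = k + 2 := rfl
    have h2 : k + 3 - 2 = k + 1 := rfl
    rw [h1, h2]
    apply op_ext
    intro y
    have hD : (Dop - (1 - t) • 1) (lp.single 2 y 1)
        = ((G.degree y : ℂ) - (1 - t)) • lp.single 2 y 1 := by
      rw [ContinuousLinearMap.sub_apply, ContinuousLinearMap.smul_apply,
        ContinuousLinearMap.one_apply, dop_single G Dop hDop y,
        sub_smul (G.degree y : ℂ) (1 - t)]
    apply lp.ext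
    funext x
    simp only [ContinuousLinearMap.sub_apply, ContinuousLinearMap.smul_apply,
      ContinuousLinearMap.mul_apply, hD, map_smul, hsingle y, map_sum, lp.coeFn_sub,
      Pi.sub_apply, lp.coeFn_smul, Pi.smul_apply, smul_eq_mul, lp.coeFn_sum,
      Finset.sum_apply, hCop]
    rw [centB G t k x y]
    ring

end BZ
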